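/- For every K ≥ 1 there exists a constant k ∈ [0,1), depending only on K, with the following property: if σ is a 2×2 real matrix satisfying σξ·ξ ≥ K⁻¹|ξ|² and σ⁻¹ξ·ξ ≥ K⁻¹|ξ|² for every ξ ∈ ℝ², then the complex numbers μ = (σ₂₂ − σ₁₁ − i(σ₁₂ + σ₂₁)) / (1 + Tr σ + det σ) and ν = (1 − det σ + i(σ₁₂ − σ₂₁)) / (1 + Tr σ + det σ) satisfy |μ| + |ν| ≤ k < 1. -/

import Mathlib

open Matrix Complex

noncomputable section

set_option maxHeartbeats 1000000 in
lemma key_ineq (K k A B T D : ℝ) (hK : 1 ≤ K) (hk0 : 0 ≤ k) (hk1 : k ≤ 1)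
    (hk2 : k^2 * (K+1) = K - 1) (hD : 0 < D) (hA0 : 0 ≤ A) (hB0 : 0 ≤ B)
    (hA1 : K*A ≤ K*T - 2) (hA2 : K*A ≤ K*T - 2*D)
    (hAlow : T^2 - 4*D ≤ A^2)
    (hB2 : B^2 = A^2 + (1+D)^2 - T^2) :
    A + B ≤ k * (1 + T + D) := by
  have hK0 : (0:ℝ) < K := by linarith
  have hKA : 0 ≤ K*A := mul_nonneg hK0.le hA0
  have hTpos : 0 < T := by nlinarith
  have hp : 0 < 1 + T + D := by linarith
  have hKT : 1 + D ≤ K*T := by linarith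
  have h4 : K*T ≤ K^2 + D := by
    nlinarith [mul_le_mul hA2 hA2 hKA (by linarith), hD, sq_nonneg (K*A)]
  have h5 : K*T ≤ K^2*D + 1 := by
    nlinarith [mul_le_mul hA1 hA1 hKA (by linarith), sq_nonneg (K*A)]
  have hw : K*(1-k^2) = 1 + k^2 := by linear_combination -hk2
  have h8 : 2*k*(K*A) ≤ 2*k*(K*T - (1+D)) :=
    mul_le_mul_of_nonneg_left (by linarith) (by linarith : (0:ℝ) ≤ 2*k)
  have e : K*(1+D-T) + 2*k*(K*T - (1+D)) - K*(k^2*(1+T+D))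
      = (1-k)^2*((1+D) - K*T) := by linear_combination (1+D) * hw
  have hnn : (1-k)^2*((1+D) - K*T) ≤ 0 :=
    mul_nonpos_of_nonneg_of_nonpos (sq_nonneg _) (by linarith)
  have hi : K*((1+D-T) + 2*k*A) ≤ K*(k^2*(1+T+D)) := by linarith only [e, h8, hnn]
  have hi' : (1+D-T) + 2*k*A ≤ k^2*(1+T+D) := le_of_mul_le_mul_left hi hK0
  have h9 : K - 1 ≤ k*(K+1) := by
    linarith only [hk2, mul_nonneg (mul_nonneg hk0 (sub_nonneg.2 hk1)) (by linarith : (0:ℝ) ≤ K+1)]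
  have h9' : (1-k)*(K^2+1) ≤ 2 + 2*k*K := by
    linarith only [mul_le_mul_of_nonneg_right h9 (by linarith : (0:ℝ) ≤ K+1)]
  have hT2 : 2*(K*T) ≤ (K^2+1)*(1+D) := by linarith
  have h10 : (1-k)*(2*(K*T)) ≤ (1-k)*((K^2+1)*(1+D)) :=
    mul_le_mul_of_nonneg_left hT2 (by linarith)
  have h11 : ((1-k)*(K^2+1))*(1+D) ≤ (2+2*k*K)*(1+D) :=
    mul_le_mul_of_nonneg_right h9' (by linarith)
  have h12 : K*A ≤ K*(k*(1+T+D)) := by linarith only [h10, h11, hA1, hA2]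
  have hii : A ≤ k*(1+T+D) := le_of_mul_le_mul_left h12 hK0
  have hpq : B^2 = A^2 + (1+T+D)*(1+D-T) := by linear_combination hB2
  have hBsq : B^2 ≤ (k*(1+T+D) - A)^2 := by
    linarith only [hpq, mul_le_mul_of_nonneg_left hi' hp.le]
  have hfin : B ≤ k*(1+T+D) - A :=
    (pow_le_pow_iff_left₀ hB0 (by linarith) two_ne_zero).mp hBsq
  linarith

set_option maxHeartbeats 1600000 in
/-- **Ellipticity of the complex dilatations.** For every `K ≥ 1` there is `k ∈ [0,1)`,
depending only on `K`, such that for every `K`-elliptic `2×2` matrix `σ` the complex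
dilatations `μ`, `ν` satisfy `|μ| + |ν| ≤ k < 1`. -/
theorem complex_dilatations_bound (K : ℝ) (hK : 1 ≤ K) :
    ∃ k : ℝ, 0 ≤ k ∧ k < 1 ∧
      ∀ σ : Matrix (Fin 2) (Fin 2) ℝ,
        (∀ ξ : Fin 2 → ℝ, K⁻¹ * (ξ ⬝ᵥ ξ) ≤ σ.mulVec ξ ⬝ᵥ ξ ∧
          K⁻¹ * (ξ ⬝ᵥ ξ) ≤ σ⁻¹.mulVec ξ ⬝ᵥ ξ) →
        Norm.norm ((↑(σ 1 1) - ↑(σ 0 0) - Complex.I * (↑(σ 0 1) + ↑(σ 1 0))) /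
            (1 + ↑σ.trace + ↑σ.det)) +
          Norm.norm ((1 - ↑σ.det + Complex.I * (↑(σ 0 1) - ↑(σ 1 0))) /
            (1 + ↑σ.trace + ↑σ.det)) ≤ k := by
  have hK0 : (0:ℝ) < K := by linarith
  have hratio : 0 ≤ (K-1)/(K+1) := div_nonneg (by linarith) (by linarith)
  have hklt : Real.sqrt ((K-1)/(K+1)) < 1 := by
    have h1 : (K-1)/(K+1) < 1 := by rw [div_lt_one (by linarith)]; linarith
    calc Real.sqrt ((K-1)/(K+1)) < Real.sqrt 1 := Real.sqrt_lt_sqrt hratio h1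
      _ = 1 := Real.sqrt_one
  refine ⟨Real.sqrt ((K-1)/(K+1)), Real.sqrt_nonneg _, hklt, ?_⟩
  intro σ hσ
  set k := Real.sqrt ((K-1)/(K+1)) with hkdef
  have hk0 : 0 ≤ k := Real.sqrt_nonneg _
  have hk2 : k^2 * (K+1) = K - 1 := by
    rw [hkdef, Real.sq_sqrt hratio]
    field_simp
  have hk1 : k ≤ 1 := hklt.le
  set a := σ 0 0 with ha'
  set b := σ 0 1 with hb'
  set c := σ 1 0 with hc'
  set d := σ 1 1 with hd'
  have h1 : ∀ x y : ℝ, K⁻¹*(x*x + y*y) ≤ a*(x*x) + (b+c)*(x*y) + d*(y*y) := by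
    intro x y
    have h := (hσ ![x,y]).1
    simp [Matrix.mulVec, dotProduct, Fin.sum_univ_two] at h
    linarith only [h]
  have hDne : σ.det ≠ 0 := by
    intro h0
    have hz : σ⁻¹ = 0 := Matrix.nonsing_inv_apply_not_isUnit σ (by simp [h0])
    have h := (hσ ![1,0]).2
    rw [hz] at h
    simp [Matrix.mulVec, dotProduct, Fin.sum_univ_two] at h
    linarith only [h, hK0]
  have hinv : σ⁻¹ = σ.det⁻¹ • !![d, -b; -c, a] := by
    rw [Matrix.inv_def, Matrix.adjugate_fin_two, Ring.inverse_eq_inv]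
  have h2 : ∀ x y : ℝ, K⁻¹*(x*x + y*y) ≤ σ.det⁻¹ * (d*(x*x) - (b+c)*(x*y) + a*(y*y)) := by
    intro x y
    have h := (hσ ![x,y]).2
    rw [hinv] at h
    simp [Matrix.mulVec, dotProduct, Fin.sum_univ_two] at h
    linarith only [h]
  have hd1 : K⁻¹ ≤ d := by linarith only [h1 0 1]
  have ha1 : K⁻¹ ≤ a := by linarith only [h1 1 0]
  have hκ : (0:ℝ) < K⁻¹ := inv_pos.2 hK0
  have hDpos : 0 < σ.det := by
    rcases lt_trichotomy σ.det 0 with h|h|h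
    · have hni : σ.det⁻¹ < 0 := inv_lt_zero.2 h
      linarith only [h2 1 0, mul_neg_of_neg_of_pos hni (lt_of_lt_of_le hκ hd1), hκ]
    · exact absurd h hDne
    · exact h
  set D := σ.det with hDdef
  have hDet : D = a*d - b*c := Matrix.det_fin_two σ
  have h2' : ∀ x y : ℝ, K⁻¹*D*(x*x + y*y) ≤ d*(x*x) - (b+c)*(x*y) + a*(y*y) := by
    intro x y
    have h := h2 x y
    rw [show σ.det⁻¹ * (d*(x*x) - (b+c)*(x*y) + a*(y*y))
        = (d*(x*x) - (b+c)*(x*y) + a*(y*y)) / σ.det from by ring] at h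
    have h' := (le_div_iff₀ hDpos).mp h
    linarith only [h']
  have hq1 : ∀ x : ℝ, 0 ≤ (a - K⁻¹)*(x*x) + (b+c)*x + (d - K⁻¹) := by
    intro x; linarith only [h1 x 1]
  have hq2 : ∀ x : ℝ, 0 ≤ (d - K⁻¹*D)*(x*x) + (-(b+c))*x + (a - K⁻¹*D) := by
    intro x; linarith only [h2' x 1]
  have hdisc1 : (b+c)^2 ≤ 4*(a-K⁻¹)*(d-K⁻¹) := by
    have h := discrim_le_zero hq1
    rw [discrim] at h
    linarith only [h]
  have hdisc2 : (b+c)^2 ≤ 4*(d-K⁻¹*D)*(a-K⁻¹*D) := by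
    have h := discrim_le_zero hq2
    rw [discrim] at h
    linarith only [h]
  have hKK : K * K⁻¹ = 1 := mul_inv_cancel₀ (ne_of_gt hK0)
  have Fa : 1 ≤ K*a := by
    linarith only [mul_le_mul_of_nonneg_left ha1 hK0.le, hKK]
  have Fd : 1 ≤ K*d := by
    linarith only [mul_le_mul_of_nonneg_left hd1 hK0.le, hKK]
  have haD : K⁻¹*D ≤ d := by linarith only [h2' 1 0]
  have hdD : K⁻¹*D ≤ a := by linarith only [h2' 0 1]
  have eKD : K*(K⁻¹*D) = D := by rw [← mul_assoc, hKK, one_mul]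
  have FaD : D ≤ K*d := by
    linarith only [mul_le_mul_of_nonneg_left haD hK0.le, eKD]
  have FdD : D ≤ K*a := by
    linarith only [mul_le_mul_of_nonneg_left hdD hK0.le, eKD]
  have Fd1 : (K*(b+c))^2 ≤ 4*(K*a-1)*(K*d-1) := by
    have m := mul_le_mul_of_nonneg_left hdisc1 (sq_nonneg K)
    have e : K^2*(4*(a-K⁻¹)*(d-K⁻¹)) = 4*(K*a-1)*(K*d-1) := by
      field_simp
    linarith only [m, e]
  have Fd2 : (K*(b+c))^2 ≤ 4*(K*d-D)*(K*a-D) := by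
    have m := mul_le_mul_of_nonneg_left hdisc2 (sq_nonneg K)
    have e : K^2*(4*(d-K⁻¹*D)*(a-K⁻¹*D)) = 4*(K*d-D)*(K*a-D) := by
      field_simp
    linarith only [m, e]
  set A := Real.sqrt ((d-a)^2+(b+c)^2) with hAdef
  set B := Real.sqrt ((1-D)^2+(b-c)^2) with hBdef
  have hA0 : 0 ≤ A := Real.sqrt_nonneg _
  have hB0 : 0 ≤ B := Real.sqrt_nonneg _
  have hAsq : A^2 = (d-a)^2+(b+c)^2 := Real.sq_sqrt (by positivity)
  have hBsq : B^2 = (1-D)^2+(b-c)^2 := Real.sq_sqrt (by positivity)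
  have hA1 : K*A ≤ K*(a+d) - 2 := by
    have hM : 0 ≤ K*(a+d) - 2 := by linarith only [Fa, Fd]
    have hsq : (K*A)^2 ≤ (K*(a+d)-2)^2 := by
      rw [mul_pow, hAsq]; linarith only [Fd1]
    exact (pow_le_pow_iff_left₀ (mul_nonneg hK0.le hA0) hM two_ne_zero).mp hsq
  have hA2 : K*A ≤ K*(a+d) - 2*D := by
    have hM : 0 ≤ K*(a+d) - 2*D := by linarith only [FaD, FdD]
    have hsq : (K*A)^2 ≤ (K*(a+d)-2*D)^2 := by
      rw [mul_pow, hAsq]; linarith only [Fd2]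
    exact (pow_le_pow_iff_left₀ (mul_nonneg hK0.le hA0) hM two_ne_zero).mp hsq
  have hAlow : (a+d)^2 - 4*D ≤ A^2 := by
    rw [hAsq]; linarith only [sq_nonneg (b-c), hDet]
  have hB2 : B^2 = A^2 + (1+D)^2 - (a+d)^2 := by
    rw [hAsq, hBsq]; linear_combination (-4:ℝ) * hDet
  have hkey := key_ineq K k A B (a+d) D hK hk0 hk1 hk2 hDpos hA0 hB0 hA1 hA2 hAlow hB2
  have hTr : σ.trace = a + d := Matrix.trace_fin_two σ
  have hTpos : 0 < a + d := by linarith only [ha1, hd1, hκ]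
  have hp : (0:ℝ) < 1 + (a+d) + D := by linarith
  have hden : ((1:ℂ) + ↑σ.trace + ↑σ.det) = ((1 + (a+d) + D : ℝ) : ℂ) := by
    rw [hTr, ← hDdef]; push_cast; ring
  have hnum1 : ((d:ℂ) - ↑a - Complex.I * (↑b + ↑c))
      = ((d-a : ℝ) : ℂ) + ((-(b+c) : ℝ) : ℂ) * Complex.I := by push_cast; ring
  have hnum2 : ((1:ℂ) - ↑σ.det + Complex.I * (↑b - ↑c))
      = ((1-D : ℝ) : ℂ) + ((b-c : ℝ) : ℂ) * Complex.I := by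
    rw [← hDdef]; push_cast; ring
  have e1 : ‖((d-a : ℝ) : ℂ) + ((-(b+c) : ℝ) : ℂ) * Complex.I‖
      = Real.sqrt ((d-a)^2 + (b+c)^2) := by
    rw [Complex.norm_def, Complex.normSq_add_mul_I, neg_sq]
  have e2 : ‖((1-D : ℝ) : ℂ) + ((b-c : ℝ) : ℂ) * Complex.I‖
      = Real.sqrt ((1-D)^2 + (b-c)^2) := by
    rw [Complex.norm_def, Complex.normSq_add_mul_I]
  have e3 : ‖((1 + (a+d) + D : ℝ) : ℂ)‖ = 1 + (a+d) + D := by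
    rw [Complex.norm_real, Real.norm_eq_abs]; exact abs_of_pos hp
  rw [norm_div, norm_div, hden, hnum1, hnum2, e1, e2, e3]
  rw [← add_div, div_le_iff₀ hp]
  exact hkey

end
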